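/- Let H be a real Hilbert space with dim H ≥ 2 and let φ : H → ℝ be such that for every nonempty closed convex set C ⊆ H, the projection P_C 0 of 0 onto C is the unique minimizer of φ on C. Then φ is strictly radially increasing: for all x, y ∈ H, ‖x‖ < ‖y‖ implies φ(x) < φ(y). -/

import Mathlib

/-- `p` is the metric projection of `x` onto `C`. -/
def IsProj {E : Type*} [NormedAddCommGroup E] (C : Set E) (x p : E) : Prop :=
  p ∈ C ∧ ∀ y ∈ C, ‖x - p‖ ≤ ‖x - y‖

open RealInnerProductSpace Real

section Aux

variable {H : Type*} [NormedAddCommGroup H] [InnerProductSpace ℝ H] [CompleteSpace H]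

/-- One comparison step: if `⟪p, p⟫ ≤ ⟪p, w⟫` then `p` is the projection of `0`
onto the segment `[p, w]`, hence `φ p < φ w`. -/
lemma step_lemma (φ : H → ℝ)
    (hφ : ∀ C : Set H, C.Nonempty → IsClosed C → Convex ℝ C →
      ∀ p, IsProj C 0 p → ∀ y ∈ C, y ≠ p → φ p < φ y)
    {p w : H} (hne : w ≠ p) (hin : ⟪p, p⟫ ≤ ⟪p, w⟫) : φ p < φ w := by
  have hcompact : IsCompact (segment ℝ p w) := by
    rw [segment_eq_image ℝ p w]
    exact (isCompact_Icc).image (by continuity)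
  have hproj : IsProj (segment ℝ p w) 0 p := by
    refine ⟨left_mem_segment ℝ p w, ?_⟩
    intro z hz
    rw [segment_eq_image' ℝ p w] at hz
    obtain ⟨t, ht, rfl⟩ := hz
    obtain ⟨ht0, ht1⟩ := ht
    have h2 : ‖p‖ ^ 2 ≤ ‖p + t • (w - p)‖ ^ 2 := by
      rw [norm_add_sq_real]
      have hip : ⟪p, t • (w - p)⟫ = t * (⟪p, w⟫ - ⟪p, p⟫) := by
        rw [real_inner_smul_right, inner_sub_right]
      nlinarith [sq_nonneg ‖t • (w - p)‖]
    have := le_of_pow_le_pow_left₀ (n := 2) (by norm_num) (norm_nonneg _) h2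
    calc ‖(0 : H) - p‖ = ‖p‖ := by simp
    _ ≤ ‖p + t • (w - p)‖ := this
    _ = ‖(0 : H) - (p + t • (w - p))‖ := by rw [zero_sub, norm_neg]
  exact hφ (segment ℝ p w) ⟨p, left_mem_segment ℝ p w⟩ hcompact.isClosed
    (convex_segment p w) p hproj w (right_mem_segment ℝ p w) hne

/-- In a space of dimension ≥ 2 there is a unit vector orthogonal to any given vector. -/
lemma exists_orthonormal (hdim : 2 ≤ Module.rank ℝ H) (e1 : H) :
    ∃ e2 : H, ‖e2‖ = 1 ∧ ⟪e1, e2⟫ = 0 := by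
  have hne : (ℝ ∙ e1)ᗮ ≠ ⊥ := by
    intro hbot
    rw [Submodule.orthogonal_eq_bot_iff] at hbot
    have h1 : Module.rank ℝ (ℝ ∙ e1) ≤ 1 := by
      simpa using rank_span_le (R := ℝ) ({e1} : Set H)
    rw [hbot] at h1
    rw [rank_top] at h1
    exact absurd (hdim.trans h1) (by norm_num)
  obtain ⟨v, hv, hv0⟩ := Submodule.exists_mem_ne_zero_of_ne_bot hne
  refine ⟨‖v‖⁻¹ • v, ?_, ?_⟩
  · rw [norm_smul, norm_inv, norm_norm, inv_mul_cancel₀ (norm_ne_zero_iff.2 hv0)]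
  · rw [real_inner_smul_right]
    have : ⟪e1, v⟫ = 0 := by
      have := (Submodule.mem_orthogonal _ v).1 hv e1 (Submodule.mem_span_singleton_self e1)
      simpa using this
    rw [this]; ring

end Aux

set_option maxHeartbeats 1000000 in
theorem strictly_radially_increasing
    {H : Type*} [NormedAddCommGroup H] [InnerProductSpace ℝ H] [CompleteSpace H]
    (hdim : 2 ≤ Module.rank ℝ H) (φ : H → ℝ)
    (hφ : ∀ C : Set H, C.Nonempty → IsClosed C → Convex ℝ C →
      ∀ p, IsProj C 0 p → ∀ y ∈ C, y ≠ p → φ p < φ y) :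
    ∀ x y : H, ‖x‖ < ‖y‖ → φ x < φ y := by
  intro x y hxy
  by_cases hx0 : x = 0
  · subst hx0
    have hy0 : y ≠ 0 := by
      intro h; rw [h] at hxy; exact lt_irrefl _ hxy
    exact step_lemma φ hφ hy0 (by simp)
  have hr : 0 < ‖x‖ := norm_pos_iff.2 hx0
  by_cases hins : ⟪x, x⟫ ≤ ⟪x, y⟫
  · refine step_lemma φ hφ (fun h => ?_) hins
    rw [h] at hxy; exact lt_irrefl _ hxy
  push_neg at hins
  rw [real_inner_self_eq_norm_sq] at hins
  set r := ‖x‖ with hr_def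
  set R := ‖y‖ with hR_def
  have hR : 0 < R := hr.trans hxy
  -- orthonormal basis of the relevant plane
  obtain ⟨e1, he1, hxe1⟩ : ∃ e1 : H, ‖e1‖ = 1 ∧ x = r • e1 := by
    refine ⟨r⁻¹ • x, ?_, ?_⟩
    · rw [norm_smul, norm_inv, norm_norm, ← hr_def, inv_mul_cancel₀ hr.ne']
    · rw [smul_smul, mul_inv_cancel₀ hr.ne', one_smul]
  have h11 : ⟪e1, e1⟫ = (1 : ℝ) := by
    rw [real_inner_self_eq_norm_sq, he1]; norm_num
  obtain ⟨e2, he2, he12, hbpos, hydec⟩ : ∃ e2 : H, ‖e2‖ = 1 ∧ ⟪e1, e2⟫ = 0 ∧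
      0 ≤ ⟪y, e2⟫ ∧ y = ⟪y, e1⟫ • e1 + ⟪y, e2⟫ • e2 := by
    by_cases hw0 : y - ⟪y, e1⟫ • e1 = 0
    · obtain ⟨e2, he2, he12⟩ := exists_orthonormal hdim e1
      have hy : y = ⟪y, e1⟫ • e1 := by rwa [sub_eq_zero] at hw0
      have hye2 : ⟪y, e2⟫ = 0 := by
        rw [hy, real_inner_smul_left, he12, mul_zero]
      exact ⟨e2, he2, he12, by rw [hye2], by rw [hye2, zero_smul, add_zero, ← hy]⟩
    · obtain ⟨w, hw_def⟩ : ∃ w : H, w = y - ⟪y, e1⟫ • e1 := ⟨_, rfl⟩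
      rw [← hw_def] at hw0
      have hwn : 0 < ‖w‖ := norm_pos_iff.2 hw0
      have he1w : ⟪e1, w⟫ = 0 := by
        rw [hw_def, inner_sub_right, real_inner_smul_right, h11, mul_one,
          real_inner_comm, sub_self]
      have hyw : ⟪y, w⟫ = ‖w‖ ^ 2 := by
        have hww : ⟪w, w⟫ = ‖w‖ ^ 2 := real_inner_self_eq_norm_sq w
        calc ⟪y, w⟫ = ⟪w + ⟪y, e1⟫ • e1, w⟫ := by rw [hw_def]; congr 1; abel
        _ = ⟪w, w⟫ + ⟪y, e1⟫ * ⟪e1, w⟫ := by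
            rw [inner_add_left, real_inner_smul_left]
        _ = ‖w‖ ^ 2 := by rw [he1w, hww]; ring
      refine ⟨‖w‖⁻¹ • w, ?_, ?_, ?_, ?_⟩
      · rw [norm_smul, norm_inv, norm_norm, inv_mul_cancel₀ hwn.ne']
      · rw [real_inner_smul_right, he1w, mul_zero]
      · rw [real_inner_smul_right, hyw]
        positivity
      · have hcoef : ⟪y, ‖w‖⁻¹ • w⟫ = ‖w‖ := by
          rw [real_inner_smul_right, hyw, pow_two, ← mul_assoc,
            inv_mul_cancel₀ hwn.ne', one_mul]
        rw [hcoef, smul_smul, mul_inv_cancel₀ hwn.ne', one_smul, hw_def]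
        abel
  obtain ⟨a, ha_def⟩ : ∃ a : ℝ, a = ⟪y, e1⟫ := ⟨_, rfl⟩
  obtain ⟨b, hb_def⟩ : ∃ b : ℝ, b = ⟪y, e2⟫ := ⟨_, rfl⟩
  rw [← ha_def, ← hb_def] at hydec
  rw [← hb_def] at hbpos
  have h22 : ⟪e2, e2⟫ = (1 : ℝ) := by
    rw [real_inner_self_eq_norm_sq, he2]; norm_num
  have h21 : ⟪e2, e1⟫ = (0 : ℝ) := by rw [real_inner_comm]; exact he12
  have hIP : ∀ A B A' B' : ℝ, ⟪A • e1 + B • e2, A' • e1 + B' • e2⟫ = A * A' + B * B' := by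
    intro A B A' B'
    simp only [inner_add_left, inner_add_right, real_inner_smul_left,
      real_inner_smul_right, h11, h22, h21, he12]
    ring
  have hab : a * a + b * b = R ^ 2 := by
    have hyy : ⟪y, y⟫ = R ^ 2 := real_inner_self_eq_norm_sq y
    rw [hydec] at hyy
    rw [← hyy, hIP]
  have haR : a < R := by
    have hae : a = r⁻¹ * ⟪x, y⟫ := by
      rw [ha_def]
      nth_rewrite 1 [hxe1]
      rw [real_inner_comm, real_inner_smul_left]
      field_simp
    rw [hae]
    calc r⁻¹ * ⟪x, y⟫ < r⁻¹ * r ^ 2 := by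
          apply mul_lt_mul_of_pos_left hins (by positivity)
    _ = r := by field_simp
    _ < R := hxy
  -- angle parameters
  obtain ⟨c, hc_def⟩ : ∃ c : ℝ, c = a / R := ⟨_, rfl⟩
  obtain ⟨s, hs_def⟩ : ∃ s : ℝ, s = b / R := ⟨_, rfl⟩
  have hc2s2 : c ^ 2 + s ^ 2 = 1 := by
    rw [hc_def, hs_def]
    field_simp
    linear_combination hab
  have hcm1 : -1 ≤ c := by nlinarith only [hc2s2, sq_nonneg s, sq_nonneg (c + 1)]
  have hc1 : c < 1 := by
    rw [hc_def, div_lt_one hR]; exact haR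
  have hs0 : 0 ≤ s := by rw [hs_def]; positivity
  obtain ⟨θ, hθ_def⟩ : ∃ θ : ℝ, θ = Real.arccos c := ⟨_, rfl⟩
  have hcosθ : Real.cos θ = c := by rw [hθ_def]; exact Real.cos_arccos hcm1 hc1.le
  have hsinθ : Real.sin θ = s := by
    rw [hθ_def, Real.sin_arccos, show 1 - c ^ 2 = s ^ 2 by linarith only [hc2s2], Real.sqrt_sq hs0]
  have hθpos : 0 < θ := by rw [hθ_def]; exact Real.arccos_pos.2 hc1
  have hθpi : θ ≤ π := by rw [hθ_def]; exact Real.arccos_le_pi c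
  obtain ⟨q, hq_def⟩ : ∃ q : ℝ, q = r / R := ⟨_, rfl⟩
  have hq0 : 0 < q := by rw [hq_def]; positivity
  have hq1 : q < 1 := by rw [hq_def, div_lt_one hR]; exact hxy
  obtain ⟨k, hk3, hk2⟩ : ∃ k : ℕ, (3 : ℝ) ≤ (k : ℝ) ∧ π ^ 2 ≤ (k : ℝ) * (1 - q) := by
    refine ⟨Nat.ceil (π ^ 2 / (1 - q)) + 3, ?_, ?_⟩
    · have h0 : (0 : ℝ) ≤ (Nat.ceil (π ^ 2 / (1 - q)) : ℝ) := Nat.cast_nonneg _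
      push_cast; linarith only [h0]
    · have h1 : π ^ 2 / (1 - q) ≤ ((Nat.ceil (π ^ 2 / (1 - q)) + 3 : ℕ) : ℝ) := by
        refine le_trans (Nat.le_ceil _) ?_
        push_cast; linarith only []
      rw [div_le_iff₀ (by linarith only [hq1])] at h1
      linarith only [h1]
  have hkpos : (0 : ℝ) < (k : ℝ) := by linarith only [hk3]
  have hkbound : π ^ 2 / (2 * k) ≤ (1 - q) / 2 := by
    have h2 : π ^ 2 / (2 * k) ≤ ((k : ℝ) * (1 - q)) / (2 * k) := by
      gcongr
    have h3 : ((k : ℝ) * (1 - q)) / (2 * k) = (1 - q) / 2 := by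
      field_simp
    linarith only [h2, h3]
  obtain ⟨α, hα_def⟩ : ∃ α : ℝ, α = θ / k := ⟨_, rfl⟩
  have hα0 : 0 < α := by rw [hα_def]; exact div_pos hθpos hkpos
  have hαle : α ≤ π / 3 := by
    rw [hα_def, div_le_div_iff₀ hkpos (by norm_num)]
    have h1 : π * 3 ≤ π * k := by
      apply mul_le_mul_of_nonneg_left hk3 Real.pi_pos.le
    linarith only [h1, hθpi, Real.pi_pos, mul_le_mul_of_nonneg_right hθpi (by norm_num : (0:ℝ) ≤ 3)]
  have hcosα_pos : 0 < Real.cos α := by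
    apply Real.cos_pos_of_mem_Ioo
    constructor
    · linarith only [hα0, Real.pi_pos]
    · linarith only [hαle, Real.pi_pos]
  have hcosα_lt1 : Real.cos α < 1 := by
    rcases lt_or_eq_of_le (Real.cos_le_one α) with h | h
    · exact h
    · exfalso
      have := (Real.cos_eq_one_iff_of_lt_of_lt
        (by linarith only [hα0, Real.pi_pos] : -(2 * π) < α)
        (by linarith only [hαle, Real.pi_pos] : α < 2 * π)).1 h
      linarith only [this, hα0]
  obtain ⟨K, hK_def⟩ : ∃ K : ℝ, K = Real.cos α ^ k := ⟨_, rfl⟩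
  have hKpos : 0 < K := by rw [hK_def]; exact pow_pos hcosα_pos k
  have hqK : q < K := by
    have hbern : 1 + (k : ℝ) * (Real.cos α - 1) ≤ (1 + (Real.cos α - 1)) ^ k :=
      one_add_mul_le_pow (by linarith only [Real.neg_one_le_cos α]) k
    have hsimp : (1 + (Real.cos α - 1)) = Real.cos α := by ring
    rw [hsimp] at hbern
    have hcb : 1 - α ^ 2 / 2 ≤ Real.cos α := Real.one_sub_sq_div_two_le_cos
    have hka : (k : ℝ) * α ^ 2 = θ ^ 2 / k := by
      rw [hα_def]; field_simp
    have hθ2 : θ ^ 2 ≤ π ^ 2 := pow_le_pow_left₀ hθpos.le hθpi 2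
    have h6 : θ ^ 2 / k ≤ 1 - q := by
      rw [div_le_iff₀ hkpos]
      linarith only [hθ2, hk2]
    have h7 : 1 - (k : ℝ) * (α ^ 2 / 2) ≤ 1 + (k : ℝ) * (Real.cos α - 1) := by
      have hm := mul_le_mul_of_nonneg_left
        (by linarith only [hcb] : -(α ^ 2 / 2) ≤ Real.cos α - 1) hkpos.le
      linarith only [hm]
    have h8 : (1 + q) / 2 ≤ 1 - (k : ℝ) * (α ^ 2 / 2) := by
      have hh : (k : ℝ) * (α ^ 2 / 2) = θ ^ 2 / k / 2 := by
        rw [← hka]; ring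
      rw [hh]
      linarith only [h6]
    rw [hK_def]
    linarith only [hbern, h7, h8, hq1]
  -- the spiral chain
  obtain ⟨z, hz_def⟩ : ∃ z : ℕ → H, z = fun j : ℕ =>
      (r / Real.cos α ^ j) • ((Real.cos ((j : ℝ) * α)) • e1 + (Real.sin ((j : ℝ) * α)) • e2) :=
    ⟨_, rfl⟩
  have hz0 : z 0 = x := by
    rw [hz_def]
    simp only [Nat.cast_zero, zero_mul, Real.cos_zero, Real.sin_zero, pow_zero]
    rw [one_smul, zero_smul, add_zero, div_one, hxe1]
  have hzip : ∀ i j : ℕ, ⟪z i, z j⟫ =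
      (r / Real.cos α ^ i) * (r / Real.cos α ^ j) * Real.cos ((j : ℝ) * α - (i : ℝ) * α) := by
    intro i j
    rw [hz_def]
    simp only
    rw [real_inner_smul_left, real_inner_smul_right, hIP, Real.cos_sub]
    ring
  have hself : ∀ j, ⟪z j, z j⟫ = (r / Real.cos α ^ j) ^ 2 := by
    intro j
    rw [hzip j j, sub_self, Real.cos_zero]; ring
  have hmono : ∀ j : ℕ, r / Real.cos α ^ j < r / Real.cos α ^ (j + 1) := by
    intro j
    apply div_lt_div_of_pos_left hr (pow_pos hcosα_pos (j + 1))
    calc Real.cos α ^ (j + 1) = Real.cos α ^ j * Real.cos α := by ring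
    _ < Real.cos α ^ j * 1 := by
        apply mul_lt_mul_of_pos_left hcosα_lt1 (pow_pos hcosα_pos j)
    _ = Real.cos α ^ j := by ring
  have hzpos : ∀ j : ℕ, 0 < r / Real.cos α ^ j := fun j => div_pos hr (pow_pos hcosα_pos j)
  have hstep : ∀ j, φ (z j) < φ (z (j + 1)) := by
    intro j
    apply step_lemma φ hφ
    · intro h
      have h2 := congrArg (fun v => ⟪v, v⟫) h
      rw [hself, hself] at h2
      nlinarith only [h2, hmono j, hzpos j, hzpos (j + 1)]
    · rw [hself j, hzip j (j + 1)]
      have hc : ((j + 1 : ℕ) : ℝ) * α - (j : ℝ) * α = α := by push_cast; ring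
      rw [hc]
      apply le_of_eq
      have hp : Real.cos α ^ (j + 1) = Real.cos α ^ j * Real.cos α := by ring
      rw [hp]
      field_simp
  have hchain : ∀ j, φ x < φ (z (j + 1)) := by
    intro j
    induction j with
    | zero => rw [← hz0]; exact hstep 0
    | succ n ih => exact ih.trans (hstep (n + 1))
  -- final step from z k to y
  have hkθ : (k : ℝ) * α = θ := by
    rw [hα_def]; field_simp
  have hfin_ip : ⟪z k, y⟫ = (r / K) * R := by
    rw [hz_def]
    simp only
    rw [hydec, real_inner_smul_left, hIP, hkθ, hcosθ, hsinθ, hK_def]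
    have hcsab : c * a + s * b = R := by
      rw [hc_def, hs_def]
      field_simp
      linear_combination hab
    rw [hcsab]
  have hzk_eq : r / Real.cos α ^ k = r / K := by rw [hK_def]
  have hzk_lt : r / K < R := by
    rw [div_lt_iff₀ hKpos]
    calc r = q * R := by rw [hq_def]; field_simp
    _ < K * R := by apply mul_lt_mul_of_pos_right hqK hR
    _ = R * K := by ring
  have hfinal : φ (z k) < φ y := by
    apply step_lemma φ hφ
    · intro h
      have h2 := congrArg (fun v => ⟪v, v⟫) h
      rw [hself] at h2
      have hyy : ⟪y, y⟫ = R ^ 2 := real_inner_self_eq_norm_sq y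
      rw [hyy, hzk_eq] at h2
      nlinarith only [h2, hzk_lt, div_pos hr hKpos, hR]
    · rw [hself k, hfin_ip, hzk_eq]
      have h1 : 0 < r / K := div_pos hr hKpos
      nlinarith only [h1, hzk_lt]
  obtain ⟨m, hm⟩ : ∃ m, k = m + 1 := by
    refine ⟨k - 1, ?_⟩
    have : 3 ≤ k := by exact_mod_cast hk3
    omega
  rw [hm] at hfinal
  exact (hchain m).trans hfinal
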